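/- arXiv:2202.12865 — 3 statements merged into one kernel-verified Lean document; each statement's English description precedes it below -/
import Mathlib

section
/- Let (X, W) be a cubature rule of algebraic degree 2(s+k) on the unit sphere S ⊆ ℝⁿ, h(t) = a_0 + a_2 t² + ⋯ + a_{2s} t^{2s} an even univariate polynomial nonnegative on [−1,1], and f a homogeneous polynomial of degree 2k with f(x) ≥ 0 for all x ∈ X. Then the polynomial Γ̂_h(f)(x) = Σ_j a_{2j} ‖x‖^{2(k−j)} ∫_S ⟨x,y⟩^{2j} f(y) dμ(y) is nonnegative at every point of S. -/
open MeasureTheory MvPolynomial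

/-- The Laplacian operator on polynomials in `n` variables. -/
noncomputable def laplacian (n : ℕ) : MvPolynomial (Fin n) ℝ →ₗ[ℝ] MvPolynomial (Fin n) ℝ :=
  ∑ i : Fin n,
    LinearMap.comp (MvPolynomial.pderiv i).toLinearMap (MvPolynomial.pderiv i).toLinearMap

/-- The space `H_j` of homogeneous harmonic polynomials of degree `j` in `n` variables. -/
noncomputable def harmonicSubmodule (n j : ℕ) : Submodule ℝ (MvPolynomial (Fin n) ℝ) :=
  MvPolynomial.homogeneousSubmodule (Fin n) ℝ j ⊓ LinearMap.ker (laplacian n)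

/-- `dim H_j`. -/
noncomputable def dimHarm (n j : ℕ) : ℕ := Module.finrank ℝ (harmonicSubmodule n j)

/-- The `(n-1)`-dimensional surface (Hausdorff) measure on `ℝⁿ`. -/
noncomputable def sphereMeasure (n : ℕ) : Measure (EuclideanSpace ℝ (Fin n)) := μH[(n:ℝ) - 1]

/-- The unit sphere `S ⊆ ℝⁿ`. -/
noncomputable def usphere (n : ℕ) : Set (EuclideanSpace ℝ (Fin n)) :=
  Metric.sphere (0 : EuclideanSpace ℝ (Fin n)) 1

/-- Evaluation of a polynomial at a point of `ℝⁿ`. -/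
noncomputable def evp {n : ℕ} (x : EuclideanSpace ℝ (Fin n)) (p : MvPolynomial (Fin n) ℝ) : ℝ :=
  MvPolynomial.eval (fun i => x i) p

/-- Euclidean inner product `⟨x, y⟩`. -/
noncomputable def ip {n : ℕ} (x y : EuclideanSpace ℝ (Fin n)) : ℝ := inner ℝ x y

/-- The polynomial `‖x‖² = x₁² + ⋯ + xₙ²`. -/
noncomputable def normsq (n : ℕ) : MvPolynomial (Fin n) ℝ := ∑ i : Fin n, (MvPolynomial.X i)^2

/-- The Gegenbauer polynomials `C_j^{(α)}`. -/
noncomputable def gegenbauer (a : ℝ) : ℕ → Polynomial ℝ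
  | 0 => 1
  | 1 => Polynomial.C (2*a) * Polynomial.X
  | (j+2) => Polynomial.C ((2*((j:ℝ)+1+a))/((j:ℝ)+2)) * Polynomial.X * gegenbauer a (j+1)
      - Polynomial.C (((j:ℝ)+2*a)/((j:ℝ)+2)) * gegenbauer a j

/-- if `f` is a form of degree `2k` nonnegative on the nodes of a cubature
rule of algebraic degree `2(s+k)` and `h(t) = Σ a_{2j} t^{2j}` is even and nonnegative on
`[-1,1]`, then `Γ̂_h(f)` is nonnegative on the sphere. -/
theorem averaged_poly_nonneg
    (n s k : ℕ)
    (X : Finset (EuclideanSpace ℝ (Fin n))) (W : EuclideanSpace ℝ (Fin n) → ℝ)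
    (hXs : ∀ x ∈ X, x ∈ usphere n) (hW : ∀ x ∈ X, 0 < W x)
    (hcub : ∀ p : MvPolynomial (Fin n) ℝ, p.IsHomogeneous (2*(s+k)) →
      (∫ y in usphere n, evp y p ∂(sphereMeasure n)) = ∑ x ∈ X, W x * evp x p)
    (a : ℕ → ℝ)
    (hpos : ∀ t : ℝ, t ∈ Set.Icc (-1:ℝ) 1 → 0 ≤ ∑ j ∈ Finset.range (s+1), a j * t^(2*j))
    (f : MvPolynomial (Fin n) ℝ) (hf : f.IsHomogeneous (2*k))
    (hfX : ∀ x ∈ X, 0 ≤ evp x f) :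
    ∀ x ∈ usphere n,
      0 ≤ ∑ j ∈ Finset.range (s+1), a j *
            ∫ y in usphere n, (ip x y)^(2*j) * evp y f ∂(sphereMeasure n) := by
  intro x hx
  set L : MvPolynomial (Fin n) ℝ := ∑ i, MvPolynomial.C (x i) * MvPolynomial.X i with hLdef
  have hLhom : L.IsHomogeneous 1 :=
    IsHomogeneous.sum _ _ _ fun i _ => (isHomogeneous_X ℝ i).C_mul _
  have hNhom : (normsq n).IsHomogeneous 2 :=
    IsHomogeneous.sum _ _ _ fun i _ => by simpa using (isHomogeneous_X ℝ i).pow 2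
  have hevL : ∀ y : EuclideanSpace ℝ (Fin n), evp y L = ip x y := by
    intro y
    simp [hLdef, evp, ip, PiLp.inner_apply, RCLike.inner_apply, conj_trivial, mul_comm]
  have hevN : ∀ y ∈ usphere n, evp y (normsq n) = 1 := by
    intro y hy
    have h1 : (‖y‖ : ℝ)^2 = 1 := by
      simp only [usphere, mem_sphere_zero_iff_norm] at hy; simp [hy]
    rw [← real_inner_self_eq_norm_sq, PiLp.inner_apply] at h1
    simpa [evp, normsq, PiLp.inner_apply, RCLike.inner_apply, conj_trivial, sq] using h1
  have key : ∀ j ∈ Finset.range (s+1),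
      (∫ y in usphere n, (ip x y)^(2*j) * evp y f ∂(sphereMeasure n))
      = ∑ z ∈ X, W z * ((ip x z)^(2*j) * evp z f) := by
    intro j hj
    have hjs : j ≤ s := Nat.lt_succ_iff.mp (Finset.mem_range.mp hj)
    set p : MvPolynomial (Fin n) ℝ := L^(2*j) * (normsq n)^(s-j) * f with hpdef
    have hphom : p.IsHomogeneous (2*(s+k)) := by
      have h := ((hLhom.pow (2*j)).mul (hNhom.pow (s-j))).mul hf
      have he : 1*(2*j) + 2*(s-j) + 2*k = 2*(s+k) := by omega
      rwa [he] at h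
    have hev : ∀ z ∈ usphere n, evp z p = (ip x z)^(2*j) * evp z f := by
      intro z hz
      have h2 : evp z p = (evp z L)^(2*j) * (evp z (normsq n))^(s-j) * evp z f := by
        simp [hpdef, evp, map_mul, map_pow]
      rw [h2, hevL, hevN z hz, one_pow, mul_one]
    calc (∫ y in usphere n, (ip x y)^(2*j) * evp y f ∂(sphereMeasure n))
        = ∫ y in usphere n, evp y p ∂(sphereMeasure n) :=
          setIntegral_congr_fun (Metric.isClosed_sphere.measurableSet)
            fun z hz => (hev z hz).symm
      _ = ∑ z ∈ X, W z * evp z p := hcub p hphom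
      _ = ∑ z ∈ X, W z * ((ip x z)^(2*j) * evp z f) :=
          Finset.sum_congr rfl fun z hz => by rw [hev z (hXs z hz)]
  rw [Finset.sum_congr rfl fun j hj => by rw [key j hj]]
  have swap : ∑ j ∈ Finset.range (s+1), a j * ∑ z ∈ X, W z * ((ip x z)^(2*j) * evp z f)
      = ∑ z ∈ X, (W z * evp z f) * ∑ j ∈ Finset.range (s+1), a j * (ip x z)^(2*j) := by
    simp_rw [Finset.mul_sum]
    rw [Finset.sum_comm]
    exact Finset.sum_congr rfl fun z _ => Finset.sum_congr rfl fun j _ => by ring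
  rw [swap]
  refine Finset.sum_nonneg fun z hz => mul_nonneg (mul_nonneg (hW z hz).le (hfX z hz)) ?_
  refine hpos _ ?_
  have hx1 : ‖x‖ = 1 := by simpa [usphere, mem_sphere_zero_iff_norm] using hx
  have hz1 : ‖z‖ = 1 := by simpa [usphere, mem_sphere_zero_iff_norm] using hXs z hz
  have := abs_real_inner_le_norm x z
  rw [hx1, hz1, one_mul] at this
  have := abs_le.mp this
  exact Set.mem_Icc.mpr ⟨this.1, this.2⟩
end

section
/- Optimization-free lower bound: with h even, nonnegative on [−1,1], of degree 2s, Gegenbauer coefficients λ_0 = 1 and λ_{2j} ≠ 0 for j ≤ k, and (X,W) a cubature rule of degree 2(k+s), define F = Γ̂_h^{-1}(f) and β* = min_{z∈X} F(z). Then β* ≤ min_{x∈S} f(x) for every f ∈ R_{2k}. -/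
open MeasureTheory MvPolynomial

lemma homog_smul {n d : ℕ} {p : MvPolynomial (Fin n) ℝ} (h : p.IsHomogeneous d) (c : ℝ) :
    (c • p).IsHomogeneous d := by
  rw [MvPolynomial.smul_eq_C_mul]
  simpa using (MvPolynomial.isHomogeneous_C (Fin n) c).mul h

lemma normsq_homog (n : ℕ) : (normsq n).IsHomogeneous 2 := by
  apply MvPolynomial.IsHomogeneous.sum
  intro i _
  simpa using (MvPolynomial.isHomogeneous_X ℝ i).pow 2

lemma evp_sphere_normsq {n : ℕ} {x : EuclideanSpace ℝ (Fin n)} (hx : x ∈ usphere n) :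
    evp x (normsq n) = 1 := by
  have hnorm : ‖x‖ = 1 := by simpa [usphere] using hx
  have h2 : ∑ i, x i ^ 2 = ‖x‖ ^ 2 := by
    rw [EuclideanSpace.norm_eq, Real.sq_sqrt (by positivity)]
    simp [Real.norm_eq_abs, sq_abs]
  simp [evp, normsq, h2, hnorm]

lemma one_mem_harm (n : ℕ) : (1 : MvPolynomial (Fin n) ℝ) ∈ harmonicSubmodule n (2*0) := by
  refine Submodule.mem_inf.mpr ⟨?_, ?_⟩
  · exact (MvPolynomial.mem_homogeneousSubmodule _ _).mpr (MvPolynomial.isHomogeneous_one (Fin n) ℝ)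
  · simp [LinearMap.mem_ker, laplacian, LinearMap.sum_apply]
/-- optimization-free lower bound: `β* = min_{z∈X} (Γ̂_h⁻¹ f)(z)` is a
lower bound for `f` on the sphere, where `λ_0 = 1`, `λ_{2j} ≠ 0` for `j ≤ k`, `(X,W)` is
a cubature rule of degree `2(k+s)` and `Γ̂_h` acts diagonally with eigenvalues `λ_{2j}`
and maps node-nonnegative forms to sphere-nonnegative forms. -/
theorem optimization_free_lower_bound
    (n k s : ℕ) (hn : 1 ≤ n)
    (X : Finset (EuclideanSpace ℝ (Fin n))) (hXne : X.Nonempty)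
    (W : EuclideanSpace ℝ (Fin n) → ℝ)
    (hXs : ∀ x ∈ X, x ∈ usphere n) (hW : ∀ x ∈ X, 0 < W x)
    (hcub : ∀ p : MvPolynomial (Fin n) ℝ, p.IsHomogeneous (2*(k+s)) →
      (∫ y in usphere n, evp y p ∂(sphereMeasure n)) = ∑ x ∈ X, W x * evp x p)
    (lam : ℕ → ℝ) (hlam0 : lam 0 = 1) (hlam : ∀ j, j ≤ k → lam (2*j) ≠ 0)
    (Γop : MvPolynomial (Fin n) ℝ →ₗ[ℝ] MvPolynomial (Fin n) ℝ)
    (hdiag : ∀ j, j ≤ k → ∀ q ∈ harmonicSubmodule n (2*j),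
      Γop ((normsq n)^(k-j) * q) = lam (2*j) • ((normsq n)^(k-j) * q))
    (hpos : ∀ p : MvPolynomial (Fin n) ℝ, p.IsHomogeneous (2*k) →
      (∀ x ∈ X, 0 ≤ evp x p) → ∀ x ∈ usphere n, 0 ≤ evp x (Γop p))
    (F : Fin (k+1) → MvPolynomial (Fin n) ℝ)
    (hF : ∀ j : Fin (k+1), F j ∈ harmonicSubmodule n (2*(j:ℕ)))
    (f : MvPolynomial (Fin n) ℝ)
    (hf : f = ∑ j : Fin (k+1), (normsq n)^(k-(j:ℕ)) * F j) :
    ∀ x ∈ usphere n,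
      X.inf' hXne
          (fun z => evp z (∑ j : Fin (k+1), (1/lam (2*(j:ℕ))) • ((normsq n)^(k-(j:ℕ)) * F j)))
        ≤ evp x f := by
  intro x hx
  set G : MvPolynomial (Fin n) ℝ :=
    ∑ j : Fin (k+1), (1/lam (2*(j:ℕ))) • ((normsq n)^(k-(j:ℕ)) * F j) with hG
  set β : ℝ := X.inf' hXne (fun z => evp z G) with hβ
  set p : MvPolynomial (Fin n) ℝ := G - β • (normsq n)^k with hp
  have hterm : ∀ j : Fin (k+1), ((normsq n)^(k-(j:ℕ)) * F j).IsHomogeneous (2*k) := by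
    intro j
    have hFj : (F j).IsHomogeneous (2*(j:ℕ)) :=
      (MvPolynomial.mem_homogeneousSubmodule _ _).mp (Submodule.mem_inf.mp (hF j)).1
    have hjk : (j:ℕ) ≤ k := Nat.lt_succ_iff.mp j.2
    have h := ((normsq_homog n).pow (k-(j:ℕ))).mul hFj
    have harith : 2 * (k - (j:ℕ)) + 2*(j:ℕ) = 2*k := by omega
    rwa [harith] at h
  have hGh : G.IsHomogeneous (2*k) := by
    apply MvPolynomial.IsHomogeneous.sum
    intro j _
    exact homog_smul (hterm j) _
  have hph : p.IsHomogeneous (2*k) := by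
    apply hGh.sub
    exact homog_smul ((normsq_homog n).pow k) β
  have hnodes : ∀ z ∈ X, 0 ≤ evp z p := by
    intro z hz
    have h1 : evp z ((normsq n)^k) = 1 := by
      simp only [evp, map_pow]
      rw [show MvPolynomial.eval (fun i => z i) (normsq n) = evp z (normsq n) from rfl,
        evp_sphere_normsq (hXs z hz)]
      simp
    have hle : β ≤ evp z G := Finset.inf'_le _ hz
    have heq : evp z p = evp z G - β := by
      simp only [hp, evp, map_sub, MvPolynomial.smul_eval]
      rw [show MvPolynomial.eval (fun i => z i) ((normsq n)^k) = evp z ((normsq n)^k) from rfl, h1]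
      ring
    linarith
  have hΓG : Γop G = f := by
    rw [hG, map_sum, hf]
    apply Finset.sum_congr rfl
    intro j _
    have hjk : (j:ℕ) ≤ k := Nat.lt_succ_iff.mp j.2
    rw [LinearMap.map_smul, hdiag (j:ℕ) hjk (F j) (hF j), smul_smul,
      one_div, inv_mul_cancel₀ (hlam (j:ℕ) hjk), one_smul]
  have hΓr : Γop ((normsq n)^k) = (normsq n)^k := by
    have h := hdiag 0 (Nat.zero_le k) 1 (one_mem_harm n)
    simpa [hlam0] using h
  have hΓp : Γop p = f - β • (normsq n)^k := by
    rw [hp, map_sub, LinearMap.map_smul, hΓG, hΓr]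
  have h0 := hpos p hph hnodes x hx
  rw [hΓp] at h0
  have h1 : evp x ((normsq n)^k) = 1 := by
    simp only [evp, map_pow]
    rw [show MvPolynomial.eval (fun i => x i) (normsq n) = evp x (normsq n) from rfl,
      evp_sphere_normsq hx]
    simp
  have heq : evp x (f - β • (normsq n)^k) = evp x f - β := by
    simp only [evp, map_sub, MvPolynomial.smul_eval]
    rw [show MvPolynomial.eval (fun i => x i) ((normsq n)^k) = evp x ((normsq n)^k) from rfl, h1]
    ring
  rw [heq] at h0
  linarith
end

section
/- Let α* = min_{x∈S} f(x) for a polynomial f of degree d, let (X_k, W_k) be a cubature rule of algebraic degree k on S, and let α_k^quad = min_{x∈X_k} f(x). Then for every sum of squares g of polynomials of degree at most t with ∫_S g dμ = 1 and k = d + 2t, one has ∫_S f g dμ ≥ α_k^quad ≥ α*. -/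
open MeasureTheory MvPolynomial

/-- for a cubature rule of algebraic degree `k = d + 2t`, the cubature
minimum `α_k^quad = min_{x∈X} f(x)` satisfies
`∫ f g dμ ≥ α_k^quad ≥ α* = min_{x∈S} f(x)` for every sum of squares `g` of polynomials
of degree ≤ t with `∫ g dμ = 1`. -/
theorem cubature_upper_bound_dominates
    (n d t : ℕ) (hn : 1 ≤ n)
    (f : MvPolynomial (Fin n) ℝ) (hd : f.totalDegree ≤ d)
    (αstar : ℝ) (hα : IsLeast {r : ℝ | ∃ x ∈ usphere n, evp x f = r} αstar)
    (X : Finset (EuclideanSpace ℝ (Fin n))) (hXne : X.Nonempty)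
    (W : EuclideanSpace ℝ (Fin n) → ℝ)
    (hXs : ∀ x ∈ X, x ∈ usphere n) (hW : ∀ x ∈ X, 0 < W x)
    (hcub : ∀ p : MvPolynomial (Fin n) ℝ, p.totalDegree ≤ d + 2*t →
      (∫ x in usphere n, evp x p ∂(sphereMeasure n)) = ∑ x ∈ X, W x * evp x p)
    (g : MvPolynomial (Fin n) ℝ) (N : ℕ) (q : Fin N → MvPolynomial (Fin n) ℝ)
    (hg : g = ∑ i : Fin N, (q i)^2) (hq : ∀ i, (q i).totalDegree ≤ t)
    (hg1 : (∫ x in usphere n, evp x g ∂(sphereMeasure n)) = 1) :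
    αstar ≤ X.inf' hXne (fun x => evp x f) ∧
      X.inf' hXne (fun x => evp x f)
        ≤ ∫ x in usphere n, evp x f * evp x g ∂(sphereMeasure n) := by
    classical
  set m := X.inf' hXne (fun x => evp x f) with hm
  -- degree of g
  have hgdeg : g.totalDegree ≤ 2 * t := by
    rw [hg]
    refine le_trans (MvPolynomial.totalDegree_finset_sum _ _) ?_
    refine Finset.sup_le fun i _ => ?_
    calc ((q i)^2).totalDegree ≤ 2 * (q i).totalDegree := by
          simpa [pow_two, two_mul] using MvPolynomial.totalDegree_mul (q i) (q i)
      _ ≤ 2 * t := Nat.mul_le_mul_left 2 (hq i)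
  have hfg : (f * g).totalDegree ≤ d + 2 * t :=
    le_trans (MvPolynomial.totalDegree_mul f g) (by omega)
  have hgnn : ∀ x, 0 ≤ evp x g := by
    intro x
    rw [hg]
    simp only [evp, map_sum, map_pow]
    exact Finset.sum_nonneg fun i _ => sq_nonneg _
  constructor
  · exact Finset.le_inf' _ _ fun x hx => hα.2 ⟨x, hXs x hx, rfl⟩
  · have h1 : (∫ x in usphere n, evp x f * evp x g ∂(sphereMeasure n))
        = ∑ x ∈ X, W x * (evp x f * evp x g) := by
      have := hcub (f * g) hfg
      simpa [evp, map_mul] using this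
    have h2 : (1 : ℝ) = ∑ x ∈ X, W x * evp x g := by
      rw [← hg1]; exact hcub g (le_trans hgdeg (by omega))
    rw [h1]
    calc m = m * 1 := by ring
      _ = ∑ x ∈ X, m * (W x * evp x g) := by
          rw [h2, Finset.mul_sum]
      _ ≤ ∑ x ∈ X, W x * (evp x f * evp x g) := by
          refine Finset.sum_le_sum fun x hx => ?_
          have hmf : m ≤ evp x f := Finset.inf'_le _ hx
          have hwg : 0 ≤ W x * evp x g := mul_nonneg (hW x hx).le (hgnn x)
          calc m * (W x * evp x g) ≤ evp x f * (W x * evp x g) :=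
                mul_le_mul_of_nonneg_right hmf hwg
            _ = W x * (evp x f * evp x g) := by ring
end
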